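/- Let L ⊆ Q be a dense extension of Hom-Lie algebras such that Q is multiplicatively semiprime and Q is an algebra of quotients of L. Then for every essential Hom-ideal I of L, the extension I ⊆ Q is also dense. -/

import Mathlib

/-- A Hom-Lie algebra structure on a vector space `Q` over a field `𝔽`, with the
twisting map `α` additionally satisfying condition (2.1):
`α [x,y] = [α x, y] = [x, α y]`. -/
structure HomLieAlgebra (𝔽 : Type*) [Field 𝔽] (Q : Type*) [AddCommGroup Q] [Module 𝔽 Q] where
  bracket : Q →ₗ[𝔽] Q →ₗ[𝔽] Q
  alpha : Q →ₗ[𝔽] Q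
  skew : ∀ x y, bracket x y = - bracket y x
  jacobi : ∀ x y z, bracket (alpha x) (bracket y z) + bracket (alpha y) (bracket z x)
      + bracket (alpha z) (bracket x y) = 0
  comm₁ : ∀ x y, alpha (bracket x y) = bracket (alpha x) y
  comm₂ : ∀ x y, alpha (bracket x y) = bracket x (alpha y)

namespace HomLieAlgebra

variable {𝔽 : Type*} [Field 𝔽] {Q : Type*} [AddCommGroup Q] [Module 𝔽 Q]
variable (H : HomLieAlgebra 𝔽 Q)

/-- `S` is a Hom-subalgebra: a subspace closed under `α` and the bracket. -/
def IsSubalgebra (S : Submodule 𝔽 Q) : Prop :=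
  (∀ x ∈ S, H.alpha x ∈ S) ∧ ∀ x ∈ S, ∀ y ∈ S, H.bracket x y ∈ S

/-- `I` is a Hom-ideal of the Hom-subalgebra `L`:
a subspace `I ⊆ L` with `α(I) ⊆ I` and `[I, L] ⊆ I`. -/
def IsIdealOf (L I : Submodule 𝔽 Q) : Prop :=
  I ≤ L ∧ (∀ x ∈ I, H.alpha x ∈ I) ∧ ∀ x ∈ I, ∀ y ∈ L, H.bracket x y ∈ I

/-- The α-annihilator of the set `S` inside the subalgebra `M`:
`Ann_M(S) = {x ∈ M | [x, α(y)] = 0 for all y ∈ S}`. -/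
def annIn (M : Submodule 𝔽 Q) (S : Set Q) : Set Q :=
  {x | x ∈ M ∧ ∀ y ∈ S, H.bracket x (H.alpha y) = 0}

/-- `I` is an essential Hom-ideal of `L`: it hits every nonzero Hom-ideal of `L`. -/
def IsEssentialIdealOf (L I : Submodule 𝔽 Q) : Prop :=
  H.IsIdealOf L I ∧ ∀ J : Submodule 𝔽 Q, H.IsIdealOf L J → J ≠ ⊥ → I ⊓ J ≠ ⊥

/-- The Hom-Lie algebra `L` is semiprime: `[I, α(I)] ≠ {0}` for every nonzero
Hom-ideal `I` of `L`. -/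
def IsSemiprimeOn (L : Submodule 𝔽 Q) : Prop :=
  ∀ I : Submodule 𝔽 Q, H.IsIdealOf L I → I ≠ ⊥ →
    ∃ x ∈ I, ∃ y ∈ I, H.bracket x (H.alpha y) ≠ 0

/-- The Hom-Lie algebra `L` is prime: `[I, α(J)] ≠ {0}` for all nonzero
Hom-ideals `I`, `J` of `L`. -/
def IsPrimeOn (L : Submodule 𝔽 Q) : Prop :=
  ∀ I J : Submodule 𝔽 Q, H.IsIdealOf L I → I ≠ ⊥ → H.IsIdealOf L J → J ≠ ⊥ →
    ∃ x ∈ I, ∃ y ∈ J, H.bracket x (H.alpha y) ≠ 0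

/-- The iterated brackets `[[…[[q,x₁],x₂],…],xₙ]` with `xᵢ ∈ L` (including `q` itself). -/
inductive IsWord (L : Submodule 𝔽 Q) (q : Q) : Q → Prop
  | base : IsWord L q q
  | step {p : Q} (x : Q) : IsWord L q p → x ∈ L → IsWord L q (H.bracket p x)

/-- `_L(q)`: the linear span in `Q` of `q` together with all the iterated brackets
`[[…[[q,x₁],x₂],…],xₙ]` with `xᵢ ∈ L`. -/
def wordSpan (L : Submodule 𝔽 Q) (q : Q) : Submodule 𝔽 Q :=
  Submodule.span 𝔽 {p | H.IsWord L q p}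

/-- `(L : q) = {x ∈ L | [x, α(_L(q))] ⊆ L}`, as a subspace of `Q`. -/
def quotIdeal (L : Submodule 𝔽 Q) (q : Q) : Submodule 𝔽 Q where
  carrier := {x | x ∈ L ∧ ∀ p ∈ H.wordSpan L q, H.bracket x (H.alpha p) ∈ L}
  add_mem' := by
    rintro a b ⟨haL, ha⟩ ⟨hbL, hb⟩
    refine ⟨L.add_mem haL hbL, fun p hp => ?_⟩
    rw [map_add, LinearMap.add_apply]
    exact L.add_mem (ha p hp) (hb p hp)
  zero_mem' := ⟨L.zero_mem, fun p _ => by simp⟩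
  smul_mem' := by
    rintro c a ⟨haL, ha⟩
    refine ⟨L.smul_mem c haL, fun p hp => ?_⟩
    rw [map_smul, LinearMap.smul_apply]
    exact L.smul_mem c (ha p hp)

/-- `Q` is an algebra of quotients of its Hom-subalgebra `L`: for all `p, q ∈ Q` with
`p ≠ 0` there is `x ∈ (L : q)` with `[x, α(p)] ≠ 0`. -/
def IsAlgebraOfQuotients (L : Submodule 𝔽 Q) : Prop :=
  ∀ p q : Q, p ≠ 0 → ∃ x ∈ H.quotIdeal L q, H.bracket x (H.alpha p) ≠ 0

/-- `Q` is a weak algebra of quotients of its Hom-subalgebra `L`: for every nonzero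
`q ∈ Q` there is `x ∈ L` with `0 ≠ [x, α(q)] ∈ L`. -/
def IsWeakAlgebraOfQuotients (L : Submodule 𝔽 Q) : Prop :=
  ∀ q : Q, q ≠ 0 → ∃ x ∈ L, H.bracket x (H.alpha q) ≠ 0 ∧ H.bracket x (H.alpha q) ∈ L

/-- `Q` is ideally absorbed into `L`: for every nonzero `q ∈ Q` there is a Hom-ideal `I`
of `L` with `Ann_L(I) = {0}` and `{0} ≠ [I, α(q)] ⊆ L`. -/
def IsIdeallyAbsorbed (L : Submodule 𝔽 Q) : Prop :=
  ∀ q : Q, q ≠ 0 → ∃ I : Submodule 𝔽 Q, H.IsIdealOf L I ∧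
    H.annIn L (I : Set Q) = {0} ∧
    (∃ y ∈ I, H.bracket y (H.alpha q) ≠ 0) ∧
    ∀ y ∈ I, H.bracket y (H.alpha q) ∈ (L : Set Q)

/-- The inner derivation `ad_q : p ↦ [α(q), p]`. -/
def ad (q : Q) : Module.End 𝔽 Q := H.bracket (H.alpha q)

end HomLieAlgebra

/-- `M(Q)`: the unital associative subalgebra of `End(Q)` generated by the identity
together with the inner derivations `ad_q`, `q ∈ Q`, viewed as a set. -/
def multAlg {𝔽 Q : Type*} [Field 𝔽] [AddCommGroup Q] [Module 𝔽 Q]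
    (H : HomLieAlgebra 𝔽 Q) : Set (Module.End 𝔽 Q) :=
  ↑(Algebra.adjoin 𝔽 (Set.range H.ad))

/-- `S^ann = {μ ∈ M(Q) | μ(S) = {0}}`. -/
def multAnn {𝔽 Q : Type*} [Field 𝔽] [AddCommGroup Q] [Module 𝔽 Q]
    (H : HomLieAlgebra 𝔽 Q) (S : Set Q) : Set (Module.End 𝔽 Q) :=
  {μ ∈ multAlg H | ∀ x ∈ S, μ x = 0}

/-- The extension `S ⊆ Q` is dense if `S^ann = {0}`. -/
def IsDenseExtension {𝔽 Q : Type*} [Field 𝔽] [AddCommGroup Q] [Module 𝔽 Q]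
    (H : HomLieAlgebra 𝔽 Q) (S : Set Q) : Prop :=
  multAnn H S = {0}

section AuxiliaryLemmas

variable {𝔽 : Type*} [Field 𝔽] {Q : Type*} [AddCommGroup Q] [Module 𝔽 Q]

namespace HomLieAlgebra

variable (H : HomLieAlgebra 𝔽 Q)

lemma alshift (x y : Q) : H.bracket (H.alpha x) y = H.bracket x (H.alpha y) := by
  rw [← H.comm₁, H.comm₂]

lemma ad_apply' (q p : Q) : H.ad q p = H.bracket (H.alpha q) p := rfl

lemma ad_swap (q y : Q) : H.ad q y = - H.ad y q := by
  rw [ad_apply', ad_apply', alshift, H.skew]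

lemma ad_mem_multAlg (q : Q) : H.ad q ∈ multAlg H :=
  Algebra.subset_adjoin ⟨q, rfl⟩

lemma one_mem_multAlg : (1 : Module.End 𝔽 Q) ∈ multAlg H :=
  (Algebra.adjoin 𝔽 (Set.range H.ad)).one_mem

lemma mul_mem_multAlg {x y : Module.End 𝔽 Q} (hx : x ∈ multAlg H) (hy : y ∈ multAlg H) :
    x * y ∈ multAlg H :=
  (Algebra.adjoin 𝔽 (Set.range H.ad)).mul_mem hx hy

lemma eq_zero_of_dense {S : Set Q} (hdense : IsDenseExtension H S) {μ : Module.End 𝔽 Q}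
    (hμ : μ ∈ multAlg H) (h : ∀ x ∈ S, μ x = 0) : μ = 0 := by
  have hm : μ ∈ multAnn H S := ⟨hμ, h⟩
  rw [hdense] at hm
  exact hm

/-- Product of the inner derivations determined by a list. -/
def adList (l : List Q) : Module.End 𝔽 Q := (l.map H.ad).prod

lemma adList_nil : H.adList ([] : List Q) = 1 := rfl

lemma adList_append_singleton (l : List Q) (q : Q) :
    H.adList (l ++ [q]) = H.adList l * H.ad q := by
  unfold adList
  rw [List.map_append, List.prod_append, List.map_singleton, List.prod_singleton]

lemma adList_mem (l : List Q) : H.adList l ∈ multAlg H := by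
  induction l with
  | nil => exact H.one_mem_multAlg
  | cons q l ih =>
      have : H.adList (q :: l) = H.ad q * H.adList l := by
        unfold adList; rw [List.map_cons, List.prod_cons]
      rw [this]
      exact H.mul_mem_multAlg (H.ad_mem_multAlg q) ih

/-- The key induction: if `μ ∈ M(Q)` kills an ideal `I` of the dense subalgebra `L`, then
`μ` kills the `M(Q)`-orbit of `I`, and `μ ∘ ν ∘ ad_y = 0` for `y ∈ I`. -/
lemma key_list (L I : Submodule 𝔽 Q)
    (hdense : IsDenseExtension H (L : Set Q)) (hI : H.IsIdealOf L I)
    {μ : Module.End 𝔽 Q} (hμ : μ ∈ multAlg H) (hkill : ∀ y ∈ I, μ y = 0) (l : List Q) :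
    (∀ y ∈ I, μ (H.adList l y) = 0) ∧ (∀ y ∈ I, μ * H.adList l * H.ad y = 0) := by
  induction l using List.reverseRecOn with
  | nil =>
      constructor
      · intro y hy
        rw [adList_nil, Module.End.one_apply]
        exact hkill y hy
      · intro y hy
        apply H.eq_zero_of_dense hdense
          (H.mul_mem_multAlg (H.mul_mem_multAlg hμ H.one_mem_multAlg) (H.ad_mem_multAlg y))
        intro x hx
        have hyx : H.ad y x ∈ I := hI.2.2 _ (hI.2.1 y hy) x hx
        simp only [Module.End.mul_apply, Module.End.one_apply]
        exact hkill _ hyx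
  | append_singleton l q ih =>
      have hB : ∀ y ∈ I, μ (H.adList (l ++ [q]) y) = 0 := by
        intro y hy
        rw [adList_append_singleton, Module.End.mul_apply, ad_swap, map_neg, map_neg]
        have h2 : (μ * H.adList l * H.ad y) q = 0 := by rw [ih.2 y hy]; rfl
        simp only [Module.End.mul_apply] at h2
        rw [h2, neg_zero]
      refine ⟨hB, ?_⟩
      intro y hy
      apply H.eq_zero_of_dense hdense
        (H.mul_mem_multAlg (H.mul_mem_multAlg hμ (H.adList_mem _)) (H.ad_mem_multAlg y))
      intro x hx
      have hyx : H.ad y x ∈ I := hI.2.2 _ (hI.2.1 y hy) x hx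
      simp only [Module.End.mul_apply]
      exact hB _ hyx

lemma key_main (L I : Submodule 𝔽 Q)
    (hdense : IsDenseExtension H (L : Set Q)) (hI : H.IsIdealOf L I)
    {μ : Module.End 𝔽 Q} (hμ : μ ∈ multAlg H) (hkill : ∀ y ∈ I, μ y = 0) :
    ∀ ν ∈ multAlg H, ∀ y ∈ I, μ (ν y) = 0 ∧ μ * ν * H.ad y = 0 := by
  have hlist : ∀ lE : List (Module.End 𝔽 Q), (∀ x ∈ lE, x ∈ Set.range H.ad) →
      ∃ l : List Q, l.map H.ad = lE := by
    intro lE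
    induction lE with
    | nil => exact fun _ => ⟨[], rfl⟩
    | cons e lE ih =>
        intro h
        obtain ⟨q, hq⟩ := h e List.mem_cons_self
        obtain ⟨l, hl⟩ := ih fun x hx => h x (List.mem_cons_of_mem _ hx)
        exact ⟨q :: l, by rw [List.map_cons, hq, hl]⟩
  intro ν hν
  have hν' : ν ∈ Submodule.span 𝔽 ((Submonoid.closure (Set.range H.ad) : Submonoid (Module.End 𝔽 Q)) : Set (Module.End 𝔽 Q)) := by
    rw [← Algebra.adjoin_eq_span]
    exact hν
  refine Submodule.span_induction ?_ ?_ ?_ ?_ hν'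
  · intro w hw y hy
    obtain ⟨lE, hlE, hprod⟩ := Submonoid.exists_list_of_mem_closure hw
    obtain ⟨l, hl⟩ := hlist lE hlE
    have hwl : H.adList l = w := by rw [← hprod, ← hl]; rfl
    obtain ⟨h1, h2⟩ := H.key_list L I hdense hI hμ hkill l
    exact ⟨by rw [← hwl]; exact h1 y hy, by rw [← hwl]; exact h2 y hy⟩
  · intro y hy
    constructor
    · rw [LinearMap.zero_apply, map_zero]
    · rw [mul_zero, zero_mul]
  · intro f g _ _ hf hg y hy
    constructor
    · rw [LinearMap.add_apply, map_add, (hf y hy).1, (hg y hy).1, add_zero]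
    · rw [mul_add, add_mul, (hf y hy).2, (hg y hy).2, add_zero]
  · intro c f _ hf y hy
    constructor
    · rw [LinearMap.smul_apply, map_smul, (hf y hy).1, smul_zero]
    · rw [mul_smul_comm, smul_mul_assoc, (hf y hy).2, smul_zero]

/-- Elements `z` with `[α(z), Q] = 0`. -/
def centAnn : Submodule 𝔽 Q where
  carrier := {z | ∀ q, H.bracket (H.alpha z) q = 0}
  add_mem' := by
    intro a b ha hb
    intro q
    rw [map_add, map_add, LinearMap.add_apply, ha q, hb q, add_zero]
  zero_mem' := by
    intro q
    rw [map_zero, map_zero, LinearMap.zero_apply]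
  smul_mem' := by
    intro c a ha
    intro q
    rw [map_smul, map_smul, LinearMap.smul_apply, ha q, smul_zero]

lemma mem_centAnn {z : Q} : z ∈ H.centAnn ↔ ∀ q, H.bracket (H.alpha z) q = 0 := Iff.rfl

lemma centAnn_elim (hspQ : H.IsSemiprimeOn ⊤) {t : Q}
    (ht : ∀ p, H.bracket (H.alpha t) p = 0) : t = 0 := by
  by_contra ht0
  have hid : H.IsIdealOf ⊤ H.centAnn := by
    refine ⟨le_top, ?_, ?_⟩
    · intro z hz q
      have h1 : H.bracket (H.alpha (H.alpha z)) q = H.alpha (H.bracket (H.alpha z) q) :=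
        (H.comm₁ _ _).symm
      rw [h1, hz q, map_zero]
    · intro z hz w _
      intro q
      have h1 : H.alpha (H.bracket z w) = H.bracket (H.alpha z) w := H.comm₁ z w
      rw [h1, hz w, map_zero, LinearMap.zero_apply]
  have hne : H.centAnn ≠ ⊥ := by
    intro hbot
    have : t ∈ H.centAnn := ht
    rw [hbot, Submodule.mem_bot] at this
    exact ht0 this
  obtain ⟨x, hx, y, _, hxy⟩ := hspQ H.centAnn hid hne
  exact hxy (by rw [← H.alshift]; exact hx y)

lemma alpha_inj (hspQ : H.IsSemiprimeOn ⊤) {v : Q} (hv : H.alpha v = 0) : v = 0 := by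
  by_contra hv0
  have hker : H.IsIdealOf ⊤ (LinearMap.ker H.alpha) := by
    refine ⟨le_top, ?_, ?_⟩
    · intro x hx
      rw [LinearMap.mem_ker] at hx ⊢
      rw [hx, map_zero]
    · intro x hx y _
      rw [LinearMap.mem_ker] at hx ⊢
      rw [H.comm₁, hx, map_zero, LinearMap.zero_apply]
  have hne : LinearMap.ker H.alpha ≠ ⊥ :=
    Submodule.ne_bot_iff _ |>.mpr ⟨v, LinearMap.mem_ker.mpr hv, hv0⟩
  obtain ⟨x, _, y, hy, hxy⟩ := hspQ _ hker hne
  rw [LinearMap.mem_ker] at hy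
  exact hxy (by rw [hy, map_zero])

/-- The annihilator of `α(I)` in `L`. -/
def annSub (L I : Submodule 𝔽 Q) : Submodule 𝔽 Q where
  carrier := {v | v ∈ L ∧ ∀ y ∈ I, H.bracket (H.alpha y) v = 0}
  add_mem' := by
    rintro a b ⟨haL, ha⟩ ⟨hbL, hb⟩
    exact ⟨L.add_mem haL hbL, fun y hy => by rw [map_add, ha y hy, hb y hy, add_zero]⟩
  zero_mem' := ⟨L.zero_mem, fun y _ => map_zero _⟩
  smul_mem' := by
    rintro c a ⟨haL, ha⟩
    exact ⟨L.smul_mem c haL, fun y hy => by rw [map_smul, ha y hy, smul_zero]⟩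

lemma mem_annSub {L I : Submodule 𝔽 Q} {v : Q} :
    v ∈ H.annSub L I ↔ v ∈ L ∧ ∀ y ∈ I, H.bracket (H.alpha y) v = 0 := Iff.rfl

lemma annSub_ideal (hspQ : H.IsSemiprimeOn ⊤) {L I : Submodule 𝔽 Q}
    (hL : H.IsSubalgebra L) (hI : H.IsIdealOf L I) : H.IsIdealOf L (H.annSub L I) := by
  refine ⟨fun v hv => hv.1, ?_, ?_⟩
  · rintro v ⟨hvL, hv⟩
    refine ⟨hL.1 v hvL, fun y hy => ?_⟩
    rw [← H.comm₂, hv y hy, map_zero]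
  · rintro v ⟨hvL, hv⟩ x hx
    refine ⟨hL.2 v hvL x hx, fun y hy => ?_⟩
    have hyv : H.bracket y v = 0 :=
      H.alpha_inj hspQ (by rw [H.comm₁]; exact hv y hy)
    have hxyI : H.bracket x y ∈ I := by
      rw [H.skew x y]
      exact I.neg_mem (hI.2.2 y hy x hx)
    have h2 : H.bracket (H.alpha v) (H.bracket x y) = 0 := by
      have hb : H.bracket (H.bracket x y) v = 0 :=
        H.alpha_inj hspQ (by rw [H.comm₁]; exact hv _ hxyI)
      have hb2 : H.bracket v (H.bracket x y) = 0 := by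
        rw [H.skew, hb, neg_zero]
      rw [← H.comm₁, hb2, map_zero]
    have j := H.jacobi y v x
    rw [h2, hyv, map_zero, add_zero, add_zero] at j
    exact j

end HomLieAlgebra

end AuxiliaryLemmas

section KeyLemma

variable {𝔽 : Type*} [Field 𝔽] {Q : Type*} [AddCommGroup Q] [Module 𝔽 Q]

namespace HomLieAlgebra

variable (H : HomLieAlgebra 𝔽 Q)

/-- The crucial consequence of essentiality: no nonzero element of `Q` is annihilated
by `α(I)` for an essential ideal `I` of `L`. -/
lemma wkey (L I : Submodule 𝔽 Q) (hL : H.IsSubalgebra L)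
    (hdense : IsDenseExtension H (L : Set Q)) (hspQ : H.IsSemiprimeOn ⊤)
    (hspM : ∀ μ ∈ multAlg H, (∀ ν ∈ multAlg H, μ * ν * μ = 0) → μ = 0)
    (hq : H.IsAlgebraOfQuotients L) (hI : H.IsIdealOf L I)
    (hEss : ∀ J : Submodule 𝔽 Q, H.IsIdealOf L J → J ≠ ⊥ → I ⊓ J ≠ ⊥)
    {z : Q} (hz : z ≠ 0) : ∃ y ∈ I, H.bracket (H.alpha y) z ≠ 0 := by
  by_contra hcon
  push_neg at hcon
  -- Step 1 : the annihilator of `α(I)` in `L` is trivial.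
  have hAnn : H.annSub L I = ⊥ := by
    by_contra hne
    obtain ⟨t, htmem, ht0⟩ := (Submodule.ne_bot_iff _).mp (hEss _ (H.annSub_ideal hspQ hL hI) hne)
    have htI : t ∈ I := htmem.1
    have htA := (H.mem_annSub.mp htmem.2).2
    have hadkill : ∀ y ∈ I, H.ad t y = 0 := by
      intro y hy
      rw [H.ad_apply', H.alshift, H.skew, htA y hy, neg_zero]
    have hzero : H.ad t = 0 := by
      apply hspM _ (H.ad_mem_multAlg t)
      intro ν hν
      exact (H.key_main L I hdense hI (H.ad_mem_multAlg t) hadkill ν hν t htI).2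
    apply ht0
    apply H.centAnn_elim hspQ
    intro p
    rw [← H.ad_apply', hzero, LinearMap.zero_apply]
  -- Step 2 : use the quotients property to produce a nonzero element of that annihilator.
  obtain ⟨x, hxq, hxz⟩ := hq z z hz
  obtain ⟨hxL, hxw⟩ := hxq
  have hzw : z ∈ H.wordSpan L z := Submodule.subset_span HomLieAlgebra.IsWord.base
  have hvL : H.bracket x (H.alpha z) ∈ L := hxw z hzw
  have hvAnn : H.bracket x (H.alpha z) ∈ H.annSub L I := by
    refine ⟨hvL, fun y hy => ?_⟩
    have j := H.jacobi y x (H.alpha z)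
    have h1 : H.bracket (H.alpha z) y = 0 := by
      rw [H.alshift, H.skew, hcon y hy, neg_zero]
    have h2 : H.bracket (H.alpha (H.alpha z)) (H.bracket y x) = 0 := by
      have hyxI : H.bracket y x ∈ I := hI.2.2 y hy x hxL
      have h3 : H.bracket (H.alpha z) (H.bracket y x) = 0 := by
        rw [H.alshift, H.skew, hcon _ hyxI, neg_zero]
      rw [← H.comm₁, h3, map_zero]
    rw [h1, map_zero, h2, add_zero, add_zero] at j
    exact j
  rw [hAnn, Submodule.mem_bot] at hvAnn
  exact hxz hvAnn

end HomLieAlgebra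

end KeyLemma

/-- If `L ⊆ Q` is a dense extension of Hom-Lie algebras, `Q` is multiplicatively
semiprime (`Q` semiprime and `M(Q)` semiprime) and `Q` is an algebra of quotients of
`L`, then `I ⊆ Q` is a dense extension for every essential Hom-ideal `I` of `L`. -/
theorem dense_of_essential_ideal
    {𝔽 Q : Type*} [Field 𝔽] [AddCommGroup Q] [Module 𝔽 Q]
    (H : HomLieAlgebra 𝔽 Q) (L : Submodule 𝔽 Q) (hL : H.IsSubalgebra L)
    (hdense : IsDenseExtension H (L : Set Q))
    (hspQ : H.IsSemiprimeOn ⊤)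
    (hspM : ∀ μ ∈ multAlg H, (∀ ν ∈ multAlg H, μ * ν * μ = 0) → μ = 0)
    (hq : H.IsAlgebraOfQuotients L) :
    ∀ I : Submodule 𝔽 Q, H.IsEssentialIdealOf L I → IsDenseExtension H (I : Set Q) := by
  intro I hIe
  obtain ⟨hI, hEss⟩ := hIe
  apply Set.eq_singleton_iff_unique_mem.mpr
  constructor
  · exact ⟨(Algebra.adjoin 𝔽 (Set.range H.ad)).zero_mem, fun x _ => LinearMap.zero_apply x⟩
  · rintro μ ⟨hμM, hμI⟩
    by_contra hμ0
    have hkill : ∀ y ∈ I, μ y = 0 := fun y hy => hμI y hy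
    obtain ⟨q, hq0⟩ : ∃ q, μ q ≠ 0 := by
      by_contra h
      push_neg at h
      exact hμ0 (LinearMap.ext h)
    obtain ⟨y, hyI, hy0⟩ := H.wkey L I hL hdense hspQ hspM hq hI hEss hq0
    have hlmem : H.ad y * μ ∈ multAlg H := H.mul_mem_multAlg (H.ad_mem_multAlg y) hμM
    have hl : H.ad y * μ = 0 := by
      apply hspM _ hlmem
      intro ν hν
      ext p
      have h2 : μ (ν (H.ad y (μ p))) = 0 := by
        have hsw : H.ad y (μ p) = -(H.ad (μ p) y) := H.ad_swap y (μ p)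
        rw [hsw, map_neg, map_neg]
        have h3 := (H.key_main L I hdense hI hμM hkill (ν * H.ad (μ p))
          (H.mul_mem_multAlg hν (H.ad_mem_multAlg (μ p))) y hyI).1
        rw [Module.End.mul_apply] at h3
        rw [h3, neg_zero]
      simp only [Module.End.mul_apply, LinearMap.zero_apply]
      rw [h2, map_zero]
    apply hy0
    have h4 : (H.ad y * μ) q = 0 := by rw [hl]; rfl
    rw [Module.End.mul_apply, H.ad_apply'] at h4
    exact h4
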